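/- Let 0 < a ≤ 1 and let H_a : ℝ³ → [0,1] be the characteristic function of the set ⋃_{m ∈ ℤ} ([-10,10] × ℝ² + ((sgn m)|m|^{1/a}, 0, 0)), where sgn m = m/|m| for m ≠ 0 and sgn 0 = 1. Then there is a constant C, depending only on a, such that for every x₀ ∈ ℝ³ and every R ≥ 1, ∫_{B(x₀,R)} H_a(x) dx ≤ C R^{2+a}. (That is, H_a is a weight of fractal dimension α = 2+a.) -/

import Mathlib

open MeasureTheory Metric

lemma aux_rpow_subadd {x y p : ℝ} (hx : 0 ≤ x) (hy : 0 ≤ y) (hp : 0 ≤ p) (hp1 : p ≤ 1) :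
    (x + y) ^ p ≤ x ^ p + y ^ p := by
  have h := NNReal.rpow_add_le_add_rpow (⟨x, hx⟩ : NNReal) (⟨y, hy⟩ : NNReal) hp hp1
  exact_mod_cast h

lemma aux_count {a : ℝ} (ha0 : 0 < a) {s L : ℝ} (hs : 0 ≤ s)
    {n : ℤ} (hn : (0:ℝ) ≤ (n:ℝ)) (h1 : s ≤ (n:ℝ) ^ (1/a)) (h2 : (n:ℝ) ^ (1/a) ≤ s + L) :
    s ^ a ≤ (n:ℝ) ∧ (n:ℝ) ≤ (s + L) ^ a := by
  have hkey : ((n:ℝ) ^ (1/a)) ^ a = (n:ℝ) := by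
    rw [← Real.rpow_mul hn, one_div, inv_mul_cancel₀ ha0.ne', Real.rpow_one]
  constructor
  · calc s ^ a ≤ ((n:ℝ) ^ (1/a)) ^ a := Real.rpow_le_rpow hs h1 ha0.le
      _ = (n:ℝ) := hkey
  · calc (n:ℝ) = ((n:ℝ) ^ (1/a)) ^ a := hkey.symm
      _ ≤ (s + L) ^ a := Real.rpow_le_rpow (Real.rpow_nonneg hn _) h2 ha0.le

/-- 1D measure bound for the union of slabs intersected with an interval. -/
lemma aux_oneD {a : ℝ} (ha0 : 0 < a) (ha1 : a ≤ 1) (T R : ℝ) (hR : 1 ≤ R) :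
    volume {t : ℝ | t ∈ Set.Icc (T - R) (T + R) ∧
      ∃ m : ℤ, |t - (if 0 ≤ m then (1:ℝ) else -1) * |(m : ℝ)| ^ (1/a)| ≤ 10}
      ≤ ENNReal.ofReal (920 * R ^ a) := by
  set c : ℤ → ℝ := fun m => (if 0 ≤ m then (1:ℝ) else -1) * |(m : ℝ)| ^ (1/a) with hc
  set L : ℝ := 2 * R + 20 with hLdef
  have hL0 : (0:ℝ) ≤ L := by simp [hLdef]; linarith
  set ℓ : ℝ := L ^ a with hldef
  have hℓ0 : 0 ≤ ℓ := Real.rpow_nonneg hL0 a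
  set bp : ℝ := (max (T - R - 10) 0) ^ a with hbp
  set bm : ℝ := (max (-(T + R + 10)) 0) ^ a with hbm
  set F : Finset ℤ :=
    Finset.Icc ⌈bp⌉ ⌊bp + ℓ⌋ ∪ (Finset.Icc ⌈bm⌉ ⌊bm + ℓ⌋).image (fun n => -n) with hF
  have hsub : {t : ℝ | t ∈ Set.Icc (T - R) (T + R) ∧ ∃ m : ℤ, |t - c m| ≤ 10}
      ⊆ ⋃ m ∈ F, Set.Icc (c m - 10) (c m + 10) := by
    rintro t ⟨htI, m, hm⟩
    have htI' := htI
    rw [Set.mem_Icc] at htI'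
    rw [abs_le] at hm
    have hcm : T - R - 10 ≤ c m ∧ c m ≤ T + R + 10 := by constructor <;> linarith
    have hmF : m ∈ F := by
      by_cases h0m : 0 ≤ m
      · have habs : |(m:ℝ)| = (m:ℝ) := abs_of_nonneg (by exact_mod_cast h0m)
        have hcm' : c m = (m:ℝ) ^ (1/a) := by simp [hc, h0m, habs]
        set s : ℝ := max (T - R - 10) 0 with hsd
        have h1 : s ≤ (m:ℝ) ^ (1/a) := by
          apply max_le
          · rw [← hcm']; exact hcm.1
          · exact Real.rpow_nonneg (by exact_mod_cast h0m) _
        have h2 : (m:ℝ) ^ (1/a) ≤ s + L := by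
          rw [← hcm']
          have : T + R + 10 ≤ s + L := by
            have : T - R - 10 ≤ s := le_max_left _ _
            simp only [hLdef]; linarith
          linarith [hcm.2]
        obtain ⟨hlo, hhi⟩ := aux_count ha0 (le_max_right _ _) (by exact_mod_cast h0m) h1 h2
        have hhi' : (m:ℝ) ≤ bp + ℓ := by
          refine hhi.trans ?_
          exact aux_rpow_subadd (le_max_right _ _) hL0 ha0.le ha1
        apply Finset.mem_union_left
        rw [Finset.mem_Icc]
        exact ⟨Int.ceil_le.mpr hlo, Int.le_floor.mpr hhi'⟩
      · push_neg at h0m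
        have habs : |(m:ℝ)| = ((-m : ℤ) : ℝ) := by
          push_cast; exact abs_of_neg (by exact_mod_cast h0m)
        have hcm' : c m = -(((-m : ℤ):ℝ) ^ (1/a)) := by
          simp [hc, not_le.mpr h0m, habs]
        set s : ℝ := max (-(T + R + 10)) 0 with hsd
        have hk0 : (0:ℝ) ≤ ((-m : ℤ):ℝ) := by
          have : (0:ℤ) ≤ -m := by omega
          exact_mod_cast this
        have h1 : s ≤ ((-m : ℤ):ℝ) ^ (1/a) := by
          apply max_le
          · have := hcm.2; rw [hcm'] at this; linarith
          · exact Real.rpow_nonneg hk0 _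
        have h2 : ((-m : ℤ):ℝ) ^ (1/a) ≤ s + L := by
          have h3 : ((-m : ℤ):ℝ) ^ (1/a) ≤ -(T - R - 10) := by
            have := hcm.1; rw [hcm'] at this; linarith
          have : -(T - R - 10) ≤ s + L := by
            have : -(T + R + 10) ≤ s := le_max_left _ _
            simp only [hLdef]; linarith
          linarith
        obtain ⟨hlo, hhi⟩ := aux_count ha0 (le_max_right _ _) hk0 h1 h2
        have hhi' : ((-m : ℤ):ℝ) ≤ bm + ℓ := by
          refine hhi.trans ?_
          exact aux_rpow_subadd (le_max_right _ _) hL0 ha0.le ha1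
        apply Finset.mem_union_right
        rw [Finset.mem_image]
        refine ⟨-m, ?_, by ring⟩
        rw [Finset.mem_Icc]
        exact ⟨Int.ceil_le.mpr hlo, Int.le_floor.mpr hhi'⟩
    apply Set.mem_biUnion hmF
    rw [Set.mem_Icc]
    constructor <;> linarith
  calc volume {t : ℝ | t ∈ Set.Icc (T - R) (T + R) ∧ ∃ m : ℤ, |t - c m| ≤ 10}
      ≤ volume (⋃ m ∈ F, Set.Icc (c m - 10) (c m + 10)) := measure_mono hsub
    _ ≤ ∑ m ∈ F, volume (Set.Icc (c m - 10) (c m + 10)) := measure_biUnion_finset_le F _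
    _ = ∑ m ∈ F, ENNReal.ofReal 20 := by
        apply Finset.sum_congr rfl; intro m _
        rw [Real.volume_Icc]; norm_num
    _ = (F.card : ENNReal) * ENNReal.ofReal 20 := by
        rw [Finset.sum_const, nsmul_eq_mul]
    _ ≤ ENNReal.ofReal (2 * ℓ + 2) * ENNReal.ofReal 20 := by
        gcongr
        rw [← ENNReal.ofReal_natCast]
        apply ENNReal.ofReal_le_ofReal
        have hcard : ∀ b : ℝ, ((Finset.Icc ⌈b⌉ ⌊b + ℓ⌋).card : ℝ) ≤ ℓ + 1 := by
          intro b
          rw [Int.card_Icc]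
          have h1 : ((( ⌊b + ℓ⌋ + 1 - ⌈b⌉ : ℤ).toNat : ℤ) : ℝ) ≤ ℓ + 1 := by
            rw [Int.toNat_eq_max]
            push_cast
            apply max_le _ (by linarith)
            have := Int.floor_le (b + ℓ)
            have := Int.le_ceil b
            push_cast
            linarith
          exact_mod_cast h1
        have h2 : (F.card : ℝ) ≤ (ℓ + 1) + (ℓ + 1) := by
          have hu := Finset.card_union_le (Finset.Icc ⌈bp⌉ ⌊bp + ℓ⌋)
            ((Finset.Icc ⌈bm⌉ ⌊bm + ℓ⌋).image (fun n => -n))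
          have hi := Finset.card_image_le (f := fun n : ℤ => -n)
            (s := Finset.Icc ⌈bm⌉ ⌊bm + ℓ⌋)
          have := hcard bp
          have := hcard bm
          have : (F.card : ℝ) ≤ ((Finset.Icc ⌈bp⌉ ⌊bp + ℓ⌋).card : ℝ)
              + ((Finset.Icc ⌈bm⌉ ⌊bm + ℓ⌋).card : ℝ) := by
            rw [hF]; push_cast [← Nat.cast_add]
            exact_mod_cast hu.trans (Nat.add_le_add_left hi _)
          linarith [hcard bp, hcard bm]
        linarith
    _ = ENNReal.ofReal ((2 * ℓ + 2) * 20) := by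
        rw [ENNReal.ofReal_mul (by linarith)]
    _ ≤ ENNReal.ofReal (920 * R ^ a) := by
        apply ENNReal.ofReal_le_ofReal
        have hRa : (1:ℝ) ≤ R ^ a := Real.one_le_rpow hR ha0.le
        have hℓle : ℓ ≤ 22 * R ^ a := by
          have h1 : L ≤ 22 * R := by simp only [hLdef]; linarith
          have h2 : ℓ ≤ (22 * R) ^ a := Real.rpow_le_rpow hL0 h1 ha0.le
          have h3 : (22 * R) ^ a = 22 ^ a * R ^ a :=
            Real.mul_rpow (by norm_num) (by linarith)
          have h4 : (22:ℝ) ^ a ≤ 22 := by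
            calc (22:ℝ) ^ a ≤ 22 ^ (1:ℝ) :=
              Real.rpow_le_rpow_of_exponent_le (by norm_num) ha1
              _ = 22 := Real.rpow_one 22
          rw [h3] at h2
          refine h2.trans ?_
          have h5 : (0:ℝ) ≤ R ^ a := by linarith
          nlinarith
        nlinarith

theorem stmt_0 (a : ℝ) (ha0 : 0 < a) (ha1 : a ≤ 1) :
    ∃ C : ℝ, 0 < C ∧ ∀ (x₀ : EuclideanSpace ℝ (Fin 3)) (R : ℝ), 1 ≤ R →
      (∫ x in ball x₀ R,
        Set.indicator {x : EuclideanSpace ℝ (Fin 3) |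
            ∃ m : ℤ, |x 0 - (if 0 ≤ m then (1:ℝ) else -1) * |(m : ℝ)| ^ (1/a)| ≤ 10}
          (fun _ => (1:ℝ)) x)
      ≤ C * R ^ (2 + a) := by
  refine ⟨3680, by norm_num, ?_⟩
  intro x₀ R hR
  have hR0 : (0:ℝ) < R := lt_of_lt_of_le one_pos hR
  set c : ℤ → ℝ := fun m => (if 0 ≤ m then (1:ℝ) else -1) * |(m : ℝ)| ^ (1/a) with hc
  set S : Set (EuclideanSpace ℝ (Fin 3)) :=
    {x | ∃ m : ℤ, |x 0 - c m| ≤ 10} with hS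
  have hmeas0 : Measurable (fun x : EuclideanSpace ℝ (Fin 3) => x 0) := by
    exact (measurable_pi_apply 0).comp ((MeasurableEquiv.toLp 2 (Fin 3 → ℝ)).symm).measurable
  have hSmeas : MeasurableSet S := by
    have : S = ⋃ m : ℤ, (fun x : EuclideanSpace ℝ (Fin 3) => x 0) ⁻¹'
        {t : ℝ | |t - c m| ≤ 10} := by
      ext x; simp [hS, Set.mem_iUnion]
    rw [this]
    apply MeasurableSet.iUnion
    intro m
    exact hmeas0 (isClosed_le (by fun_prop) (by fun_prop)).measurableSet
  rw [setIntegral_indicator hSmeas, setIntegral_const, smul_eq_mul, mul_one]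
  -- the 1D slice set
  set A : Set ℝ := {t : ℝ | t ∈ Set.Icc (x₀ 0 - R) (x₀ 0 + R) ∧ ∃ m : ℤ, |t - c m| ≤ 10}
    with hA
  have hAmeas : MeasurableSet A := by
    have : A = Set.Icc (x₀ 0 - R) (x₀ 0 + R) ∩ ⋃ m : ℤ, {t : ℝ | |t - c m| ≤ 10} := by
      ext t; simp [hA, Set.mem_iUnion, and_comm]
    rw [this]
    exact measurableSet_Icc.inter (MeasurableSet.iUnion fun m =>
      (isClosed_le (by fun_prop) (by fun_prop)).measurableSet)
  set P : Set (Fin 3 → ℝ) :=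
    Set.univ.pi (fun i => if i = 0 then A else Set.Icc (x₀ i - R) (x₀ i + R)) with hP
  have hPmeas : MeasurableSet P := by
    apply MeasurableSet.univ_pi
    intro i
    by_cases h : i = 0 <;> simp [h, hAmeas]
  have hsub : ball x₀ R ∩ S ⊆ ((MeasurableEquiv.toLp 2 (Fin 3 → ℝ)).symm) ⁻¹' P := by
    rintro x ⟨hxb, m, hm⟩
    have hcoord : ∀ i, |x i - x₀ i| ≤ R := by
      intro i
      have hd : dist x x₀ < R := mem_ball.mp hxb
      have hle : dist (x i) (x₀ i) ≤ dist x x₀ := by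
        rw [EuclideanSpace.dist_eq]
        rw [show dist (x i) (x₀ i) = Real.sqrt (dist (x i) (x₀ i) ^ 2) by
          rw [Real.sqrt_sq dist_nonneg]]
        apply Real.sqrt_le_sqrt
        exact Finset.single_le_sum (f := fun j => dist (x j) (x₀ j) ^ 2)
          (fun j _ => sq_nonneg _) (Finset.mem_univ i)
      rw [Real.dist_eq] at hle
      linarith
    simp only [Set.mem_preimage, hP, Set.mem_pi, Set.mem_univ, forall_true_left]
    intro i
    have heq : ((MeasurableEquiv.toLp 2 (Fin 3 → ℝ)).symm) x i = x i := rfl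
    by_cases h : i = 0
    · subst h
      simp only [if_pos rfl, heq]
      refine ⟨Set.mem_Icc.mpr ?_, m, hm⟩
      have := hcoord 0
      rw [abs_le] at this
      constructor <;> linarith [this.1, this.2]
    · simp only [if_neg h, heq, Set.mem_Icc]
      have := hcoord i
      rw [abs_le] at this
      constructor <;> linarith [this.1, this.2]
  have hvol : volume (((MeasurableEquiv.toLp 2 (Fin 3 → ℝ)).symm) ⁻¹' P)
      = volume A * (ENNReal.ofReal (2 * R) * ENNReal.ofReal (2 * R)) := by
    rw [(EuclideanSpace.volume_preserving_symm_measurableEquiv_toLp (Fin 3)).measure_preimage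
      hPmeas.nullMeasurableSet]
    rw [hP, volume_pi_pi]
    rw [Fin.prod_univ_three]
    simp only [if_pos rfl, if_true, if_neg (by decide : (1:Fin 3) ≠ 0), if_neg (by decide : (2:Fin 3) ≠ 0)]
    rw [Real.volume_Icc, Real.volume_Icc, show x₀ 1 + R - (x₀ 1 - R) = 2 * R by ring,
        show x₀ 2 + R - (x₀ 2 - R) = 2 * R by ring, mul_assoc]
  have hbound : volume (ball x₀ R ∩ S) ≤
      ENNReal.ofReal (920 * R ^ a) * (ENNReal.ofReal (2 * R) * ENNReal.ofReal (2 * R)) := by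
    refine (measure_mono hsub).trans ?_
    rw [hvol]
    gcongr
    exact aux_oneD ha0 ha1 (x₀ 0) R hR
  have hfin : ENNReal.ofReal (920 * R ^ a) * (ENNReal.ofReal (2 * R) * ENNReal.ofReal (2 * R))
      ≠ ⊤ := by
    exact ENNReal.mul_ne_top ENNReal.ofReal_ne_top
      (ENNReal.mul_ne_top ENNReal.ofReal_ne_top ENNReal.ofReal_ne_top)
  calc (volume (ball x₀ R ∩ S)).toReal
      ≤ (ENNReal.ofReal (920 * R ^ a) *
          (ENNReal.ofReal (2 * R) * ENNReal.ofReal (2 * R))).toReal :=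
        ENNReal.toReal_mono hfin hbound
    _ = (920 * R ^ a) * ((2 * R) * (2 * R)) := by
        rw [ENNReal.toReal_mul, ENNReal.toReal_mul]
        have hRa : (0:ℝ) ≤ R ^ a := Real.rpow_nonneg hR0.le a
        rw [ENNReal.toReal_ofReal (by positivity), ENNReal.toReal_ofReal (by linarith)]
    _ ≤ 3680 * R ^ (2 + a) := by
        have : R ^ (2 + a) = R ^ (2:ℝ) * R ^ a := Real.rpow_add hR0 2 a
        rw [this, show ((2:ℝ)) = ((2:ℕ):ℝ) by norm_num, Real.rpow_natCast]
        ring_nf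
        nlinarith [Real.rpow_nonneg hR0.le a, sq_nonneg R]
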